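/- (Population error propagation for BVFT-PE.) In the finite MDP setting, let μ be a fully supported probability distribution on S×A with state marginal μ_S(s) = ∑_a μ(s,a), and suppose there exist C_A ≥ 1, C_S ≥ 1 with μ(s,a) ≥ μ_S(s)/C_A for all (s,a) and P(s'|s,a) ≤ C_S μ_S(s') for all (s,a,s'); set C = C_S C_A. Let π : S → A be a deterministic policy with value function Q^π, φ : S×A → I a partition function, f : S×A → ℝ, and ε_φ = min{∥g − Q^π∥_∞ : g is φ-measurable}. Then for every probability distribution ν on S×A with ν(s,a) ≤ C μ(s,a) for all (s,a): ∥f − Q^π∥_{2,ν} ≤ (2 ε_φ + √C · ∥f − T_G^π f∥_{2,μ}) / (1−γ). -/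

import Mathlib

open Finset

/-- Cellwise `μ`-weighted average over the cells of `φ`. -/
noncomputable def cellAvg {S A I : Type*} [Fintype S] [Fintype A] [DecidableEq I]
    (μ : S × A → ℝ) (φ : S × A → I) (h : S × A → ℝ) (x : S × A) : ℝ :=
  (∑ y : S × A, if φ y = φ x then μ y * h y else 0) /
  (∑ y : S × A, if φ y = φ x then μ y else 0)

/-- The policy Bellman operator `T^π`. -/
noncomputable def TPol {S A : Type*} [Fintype S] [Fintype A]
    (R : S × A → ℝ) (P : S × A → S → ℝ) (γ : ℝ) (π : S → A)
    (Q : S × A → ℝ) (x : S × A) : ℝ :=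
  R x + γ * ∑ s' : S, P x s' * Q (s', π s')

/-- The sup-norm over the finite state-action space. -/
noncomputable def supNorm {S A : Type*} [Fintype S] [Fintype A] [Nonempty S] [Nonempty A]
    (f : S × A → ℝ) : ℝ :=
  univ.sup' univ_nonempty fun x : S × A => |f x|

/-- The `ν`-weighted `L₂` norm. -/
noncomputable def l2mu {S A : Type*} [Fintype S] [Fintype A]
    (ν : S × A → ℝ) (f : S × A → ℝ) : ℝ :=
  Real.sqrt (∑ x : S × A, ν x * f x ^ 2)

/-- The best approximation error of `Qpi` by `φ`-measurable (piecewise constant)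
functions, in sup-norm: `ε_φ = min {‖g − Q^π‖_∞ : g is φ-measurable}`. -/
noncomputable def epsPhi {S A I : Type*} [Fintype S] [Fintype A] [Nonempty S] [Nonempty A]
    (φ : S × A → I) (Qpi : S × A → ℝ) : ℝ :=
  sInf {t : ℝ | ∃ g : S × A → ℝ,
    (∀ x y, φ x = φ y → g x = g y) ∧ supNorm (fun x => g x - Qpi x) = t}

-- Jensen-type Cauchy-Schwarz
lemma jensen' {ι : Type*} (s : Finset ι) (p z : ι → ℝ) (hp : ∀ i ∈ s, 0 ≤ p i) :
    (∑ i ∈ s, p i * z i) ^ 2 ≤ (∑ i ∈ s, p i) * ∑ i ∈ s, p i * z i ^ 2 := by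
  have h1 : ∀ i ∈ s, p i * z i = Real.sqrt (p i) * (Real.sqrt (p i) * z i) := by
    intro i hi; rw [← mul_assoc, Real.mul_self_sqrt (hp i hi)]
  calc (∑ i ∈ s, p i * z i) ^ 2
      = (∑ i ∈ s, Real.sqrt (p i) * (Real.sqrt (p i) * z i)) ^ 2 := by
        rw [Finset.sum_congr rfl h1]
    _ ≤ (∑ i ∈ s, Real.sqrt (p i) ^ 2) * ∑ i ∈ s, (Real.sqrt (p i) * z i) ^ 2 :=
        Finset.sum_mul_sq_le_sq_mul_sq s _ _
    _ = (∑ i ∈ s, p i) * ∑ i ∈ s, p i * z i ^ 2 := by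
        congr 1
        · exact Finset.sum_congr rfl fun i hi => Real.sq_sqrt (hp i hi)
        · exact Finset.sum_congr rfl fun i hi => by
            rw [mul_pow, Real.sq_sqrt (hp i hi)]

section
variable {S A I : Type*} [Fintype S] [Fintype A] [Nonempty S] [Nonempty A] [DecidableEq I]
set_option linter.unusedSectionVars false

noncomputable def cellSum (ψ : S × A → ℝ) (φ : S × A → I) (x : S × A) : ℝ :=
  ∑ y : S × A, if φ y = φ x then ψ y else 0

lemma cellSum_nonneg (ψ : S × A → ℝ) (φ : S × A → I) (hψ : ∀ y, 0 ≤ ψ y) (x : S × A) :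
    0 ≤ cellSum ψ φ x :=
  Finset.sum_nonneg fun y _ => by split_ifs; exacts [hψ y, le_refl 0]

lemma cellSum_pos (ψ : S × A → ℝ) (φ : S × A → I) (hψ : ∀ y, 0 < ψ y) (x : S × A) :
    0 < cellSum ψ φ x := by
  refine Finset.sum_pos' (fun y _ => by split_ifs; exacts [(hψ y).le, le_refl 0]) ?_
  exact ⟨x, Finset.mem_univ x, by simp [hψ x]⟩

lemma cellSum_congr (ψ : S × A → ℝ) (φ : S × A → I) {a b : S × A} (hab : φ a = φ b) :
    cellSum ψ φ a = cellSum ψ φ b := by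
  unfold cellSum; exact Finset.sum_congr rfl fun y _ => by simp [hab]

lemma cellAvg_eq_div (μ : S × A → ℝ) (φ : S × A → I) (h : S × A → ℝ) (x : S × A) :
    cellAvg μ φ h x = (∑ y : S × A, if φ y = φ x then μ y * h y else 0) / cellSum μ φ x := rfl

lemma abs_cellAvg_le (μ : S × A → ℝ) (hμ : ∀ y, 0 < μ y) (φ : S × A → I) (h : S × A → ℝ)
    {c : ℝ} (hc : ∀ y, |h y| ≤ c) (x : S × A) : |cellAvg μ φ h x| ≤ c := by
  have hD := cellSum_pos μ φ hμ x
  rw [cellAvg_eq_div, abs_div, abs_of_pos hD, div_le_iff₀ hD]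
  calc |∑ y : S × A, if φ y = φ x then μ y * h y else 0|
      ≤ ∑ y : S × A, |if φ y = φ x then μ y * h y else 0| := Finset.abs_sum_le_sum_abs _ _
    _ ≤ ∑ y : S × A, (if φ y = φ x then μ y * c else 0) := by
        refine Finset.sum_le_sum fun y _ => ?_
        split_ifs
        · rw [abs_mul, abs_of_pos (hμ y)]
          exact mul_le_mul_of_nonneg_left (hc y) (hμ y).le
        · simp
    _ = c * cellSum μ φ x := by
        rw [cellSum, Finset.mul_sum]
        exact Finset.sum_congr rfl fun y _ => by split_ifs <;> ring

lemma cellAvg_measurable (μ : S × A → ℝ) (hμ : ∀ y, 0 < μ y) (φ : S × A → I) (g : S × A → ℝ)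
    (hg : ∀ x y, φ x = φ y → g x = g y) (x : S × A) : cellAvg μ φ g x = g x := by
  have hD := cellSum_pos μ φ hμ x
  rw [cellAvg_eq_div]
  have : (∑ y : S × A, if φ y = φ x then μ y * g y else 0) = cellSum μ φ x * g x := by
    rw [cellSum, Finset.sum_mul]
    refine Finset.sum_congr rfl fun y _ => ?_
    split_ifs with hc
    · rw [hg y x hc]
    · simp
  rw [this, mul_comm, mul_div_assoc, div_self hD.ne', mul_one]

lemma cellAvg_sub (μ : S × A → ℝ) (φ : S × A → I) (h1 h2 : S × A → ℝ) (x : S × A) :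
    cellAvg μ φ (fun y => h1 y - h2 y) x = cellAvg μ φ h1 x - cellAvg μ φ h2 x := by
  unfold cellAvg
  rw [div_sub_div_same, ← Finset.sum_sub_distrib]
  congr 1
  exact Finset.sum_congr rfl fun y _ => by split_ifs <;> ring

lemma cellAvg_smul (μ : S × A → ℝ) (φ : S × A → I) (c : ℝ) (h : S × A → ℝ) (x : S × A) :
    cellAvg μ φ (fun y => c * h y) x = c * cellAvg μ φ h x := by
  unfold cellAvg
  have : (∑ y : S × A, if φ y = φ x then μ y * (c * h y) else 0)
      = c * ∑ y : S × A, if φ y = φ x then μ y * h y else 0 := by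
    rw [Finset.mul_sum]
    exact Finset.sum_congr rfl fun y _ => by split_ifs <;> ring
  rw [show (fun y => c * h y) = fun y => c * h y from rfl]
  simp only []
  rw [this, mul_div_assoc]

lemma sq_cellAvg_le (μ : S × A → ℝ) (hμ : ∀ y, 0 < μ y) (φ : S × A → I) (h : S × A → ℝ)
    (x : S × A) : (cellAvg μ φ h x) ^ 2 ≤ cellAvg μ φ (fun y => h y ^ 2) x := by
  have hD := cellSum_pos μ φ hμ x
  have hnum : ∀ (k : S × A → ℝ), (∑ y : S × A, if φ y = φ x then μ y * k y else 0)
      = ∑ y : S × A, (if φ y = φ x then μ y else 0) * k y := fun k =>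
    Finset.sum_congr rfl fun y _ => by split_ifs <;> ring
  have hp : ∀ y : S × A, 0 ≤ (if φ y = φ x then μ y else 0) := fun y => by
    split_ifs; exacts [(hμ y).le, le_refl 0]
  have hj := jensen' Finset.univ (fun y : S × A => if φ y = φ x then μ y else 0) h
    (fun y _ => hp y)
  rw [cellAvg_eq_div, cellAvg_eq_div, div_pow, div_le_div_iff₀ (pow_pos hD 2) hD]
  rw [hnum, hnum]
  have hD' : (∑ y : S × A, if φ y = φ x then μ y else 0) = cellSum μ φ x := rfl
  rw [hD'] at hj
  have hsn : 0 ≤ ∑ y : S × A, (if φ y = φ x then μ y else 0) * h y ^ 2 :=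
    Finset.sum_nonneg fun y _ => mul_nonneg (hp y) (sq_nonneg (h y))
  nlinarith [hj, hD, hsn]

end

section
variable {S A I : Type*} [Fintype S] [Fintype A] [Nonempty S] [Nonempty A] [DecidableEq I]
set_option linter.unusedSectionVars false

lemma le_supNorm (h : S × A → ℝ) (x : S × A) : |h x| ≤ supNorm h :=
  Finset.le_sup' (fun y : S × A => |h y|) (Finset.mem_univ x)

lemma supNorm_nonneg (h : S × A → ℝ) : 0 ≤ supNorm h :=
  le_trans (abs_nonneg _) (le_supNorm h (Classical.arbitrary _))

/-- Change of measure: ν-average of cell averages equals a reweighted plain average. -/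
lemma sum_mul_cellAvg (μ : S × A → ℝ) (hμ : ∀ y, 0 < μ y) (φ : S × A → I)
    (ν h : S × A → ℝ) :
    ∑ x : S × A, ν x * cellAvg μ φ h x
      = ∑ y : S × A, (μ y * cellSum ν φ y / cellSum μ φ y) * h y := by
  have step1 : ∀ x : S × A, ν x * cellAvg μ φ h x
      = ∑ y : S × A, (if φ y = φ x then ν x * (μ y * h y) / cellSum μ φ x else 0) := by
    intro x
    rw [cellAvg_eq_div, ← mul_div_assoc, Finset.mul_sum, Finset.sum_div]
    exact Finset.sum_congr rfl fun y _ => by split_ifs <;> simp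
  rw [Finset.sum_congr rfl fun x _ => step1 x, Finset.sum_comm]
  refine Finset.sum_congr rfl fun y _ => ?_
  have step2 : ∀ x : S × A, (if φ y = φ x then ν x * (μ y * h y) / cellSum μ φ x else 0)
      = (if φ x = φ y then ν x else 0) * (μ y * h y / cellSum μ φ y) := by
    intro x
    by_cases hc : φ y = φ x
    · rw [if_pos hc, if_pos hc.symm, cellSum_congr μ φ hc.symm]
      ring
    · rw [if_neg hc, if_neg (fun h' => hc h'.symm), zero_mul]
  rw [Finset.sum_congr rfl fun x _ => step2 x, ← Finset.sum_mul]
  have : (∑ x : S × A, if φ x = φ y then ν x else 0) = cellSum ν φ y := rfl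
  rw [this]; ring

lemma l2mu_triangle (ν : S × A → ℝ) (hν : ∀ x, 0 ≤ ν x) (a b : S × A → ℝ) :
    l2mu ν (fun x => a x + b x) ≤ l2mu ν a + l2mu ν b := by
  set X := ∑ x : S × A, ν x * a x ^ 2 with hX
  set Y := ∑ x : S × A, ν x * b x ^ 2 with hY
  set Z := ∑ x : S × A, ν x * (a x * b x) with hZ
  have hX0 : 0 ≤ X := Finset.sum_nonneg fun x _ => mul_nonneg (hν x) (sq_nonneg _)
  have hY0 : 0 ≤ Y := Finset.sum_nonneg fun x _ => mul_nonneg (hν x) (sq_nonneg _)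
  have hcs : Z ^ 2 ≤ X * Y := by
    have := Finset.sum_mul_sq_le_sq_mul_sq Finset.univ
      (fun x : S × A => Real.sqrt (ν x) * a x) (fun x : S × A => Real.sqrt (ν x) * b x)
    have e1 : ∀ x : S × A, (Real.sqrt (ν x) * a x) * (Real.sqrt (ν x) * b x)
        = ν x * (a x * b x) := fun x => by
      rw [show Real.sqrt (ν x) * a x * (Real.sqrt (ν x) * b x)
        = (Real.sqrt (ν x) * Real.sqrt (ν x)) * (a x * b x) from by ring,
        Real.mul_self_sqrt (hν x)]
    have e2 : ∀ x : S × A, (Real.sqrt (ν x) * a x) ^ 2 = ν x * a x ^ 2 := fun x => by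
      rw [mul_pow, Real.sq_sqrt (hν x)]
    have e3 : ∀ x : S × A, (Real.sqrt (ν x) * b x) ^ 2 = ν x * b x ^ 2 := fun x => by
      rw [mul_pow, Real.sq_sqrt (hν x)]
    rw [Finset.sum_congr rfl fun x _ => e1 x, Finset.sum_congr rfl fun x _ => e2 x,
      Finset.sum_congr rfl fun x _ => e3 x] at this
    exact this
  have hZle : Z ≤ Real.sqrt X * Real.sqrt Y := by
    calc Z ≤ |Z| := le_abs_self Z
      _ = Real.sqrt (Z ^ 2) := (Real.sqrt_sq_eq_abs Z).symm
      _ ≤ Real.sqrt (X * Y) := Real.sqrt_le_sqrt hcs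
      _ = Real.sqrt X * Real.sqrt Y := Real.sqrt_mul hX0 _
  have hexp : ∑ x : S × A, ν x * (a x + b x) ^ 2 = X + 2 * Z + Y := by
    rw [hX, hY, hZ, Finset.mul_sum, ← Finset.sum_add_distrib, ← Finset.sum_add_distrib]
    exact Finset.sum_congr rfl fun x _ => by ring
  rw [l2mu, l2mu, l2mu, ← hX, ← hY, hexp]
  have hbound : X + 2 * Z + Y ≤ (Real.sqrt X + Real.sqrt Y) ^ 2 := by
    have sx : Real.sqrt X ^ 2 = X := Real.sq_sqrt hX0
    have sy : Real.sqrt Y ^ 2 = Y := Real.sq_sqrt hY0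
    nlinarith [hZle, sx, sy]
  calc Real.sqrt (X + 2 * Z + Y) ≤ Real.sqrt ((Real.sqrt X + Real.sqrt Y) ^ 2) :=
        Real.sqrt_le_sqrt hbound
    _ = Real.sqrt X + Real.sqrt Y :=
        Real.sqrt_sq (by positivity)

lemma l2mu_le_sqrt_mul (μ ν : S × A → ℝ) (hν : ∀ x, 0 ≤ ν x) {C : ℝ} (hC : 0 ≤ C)
    (hdom : ∀ x, ν x ≤ C * μ x) (hμ : ∀ x, 0 ≤ μ x) (h : S × A → ℝ) :
    l2mu ν h ≤ Real.sqrt C * l2mu μ h := by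
  rw [l2mu, l2mu, ← Real.sqrt_mul hC, Finset.mul_sum]
  refine Real.sqrt_le_sqrt (Finset.sum_le_sum fun x _ => ?_)
  rw [← mul_assoc]
  exact mul_le_mul_of_nonneg_right (hdom x) (sq_nonneg (h x))

lemma l2mu_le_supNorm (ν : S × A → ℝ) (hν : ∀ x, 0 ≤ ν x) (hν1 : ∑ x : S × A, ν x = 1)
    (h : S × A → ℝ) : l2mu ν h ≤ supNorm h := by
  have hs0 : 0 ≤ supNorm h := supNorm_nonneg h
  rw [l2mu]
  have : ∑ x : S × A, ν x * h x ^ 2 ≤ supNorm h ^ 2 := by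
    calc ∑ x : S × A, ν x * h x ^ 2 ≤ ∑ x : S × A, ν x * supNorm h ^ 2 := by
          refine Finset.sum_le_sum fun x _ => mul_le_mul_of_nonneg_left ?_ (hν x)
          rw [← sq_abs]
          exact pow_le_pow_left₀ (abs_nonneg _) (le_supNorm h x) 2
      _ = supNorm h ^ 2 := by rw [← Finset.sum_mul, hν1, one_mul]
  calc Real.sqrt (∑ x : S × A, ν x * h x ^ 2) ≤ Real.sqrt (supNorm h ^ 2) :=
        Real.sqrt_le_sqrt this
    _ = supNorm h := Real.sqrt_sq hs0

end

section
variable {S A I : Type*} [Fintype S] [Fintype A] [Nonempty S] [Nonempty A] [DecidableEq I]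
set_option linter.unusedSectionVars false

noncomputable def wgt (μ : S × A → ℝ) (φ : S × A → I) (ν : S × A → ℝ) (y : S × A) : ℝ :=
  μ y * cellSum ν φ y / cellSum μ φ y

lemma sum_mul_cellAvg' (μ : S × A → ℝ) (hμ : ∀ y, 0 < μ y) (φ : S × A → I)
    (ν h : S × A → ℝ) :
    ∑ x : S × A, ν x * cellAvg μ φ h x = ∑ y : S × A, wgt μ φ ν y * h y :=
  sum_mul_cellAvg μ hμ φ ν h

lemma wgt_nonneg (μ : S × A → ℝ) (hμ : ∀ y, 0 < μ y) (φ : S × A → I)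
    (ν : S × A → ℝ) (hν : ∀ y, 0 ≤ ν y) (y : S × A) : 0 ≤ wgt μ φ ν y :=
  div_nonneg (mul_nonneg (hμ y).le (cellSum_nonneg ν φ hν y)) (cellSum_pos μ φ hμ y).le

lemma wgt_sum (μ : S × A → ℝ) (hμ : ∀ y, 0 < μ y) (φ : S × A → I)
    (ν : S × A → ℝ) (hν1 : ∑ x : S × A, ν x = 1) : ∑ y : S × A, wgt μ φ ν y = 1 := by
  have h2 : ∀ x, cellAvg μ φ (fun _ => (1:ℝ)) x = 1 := fun x =>
    cellAvg_measurable μ hμ φ (fun _ => (1:ℝ)) (fun _ _ _ => rfl) x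
  calc ∑ y : S × A, wgt μ φ ν y = ∑ y : S × A, wgt μ φ ν y * 1 := by simp
    _ = ∑ x : S × A, ν x * cellAvg μ φ (fun _ => (1:ℝ)) x :=
        (sum_mul_cellAvg' μ hμ φ ν _).symm
    _ = ∑ x : S × A, ν x := Finset.sum_congr rfl fun x _ => by rw [h2 x, mul_one]
    _ = 1 := hν1

lemma wgt_le (μ : S × A → ℝ) (hμ : ∀ y, 0 < μ y) (φ : S × A → I)
    (ν : S × A → ℝ) {C : ℝ} (hdom : ∀ x, ν x ≤ C * μ x) (y : S × A) :
    wgt μ φ ν y ≤ C * μ y := by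
  have hD := cellSum_pos μ φ hμ y
  have hcell : cellSum ν φ y ≤ C * cellSum μ φ y := by
    rw [cellSum, cellSum, Finset.mul_sum]
    refine Finset.sum_le_sum fun z _ => ?_
    split_ifs with hc
    · exact hdom z
    · simp
  rw [wgt, div_le_iff₀ hD]
  calc μ y * cellSum ν φ y ≤ μ y * (C * cellSum μ φ y) :=
        mul_le_mul_of_nonneg_left hcell (hμ y).le
    _ = C * μ y * cellSum μ φ y := by ring

lemma eps_bound (μ : S × A → ℝ) (hμ : ∀ y, 0 < μ y) (φ : S × A → I) (Qpi : S × A → ℝ)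
    (x : S × A) : |cellAvg μ φ Qpi x - Qpi x| ≤ 2 * epsPhi φ Qpi := by
  have hne : {t : ℝ | ∃ g : S × A → ℝ,
      (∀ x y, φ x = φ y → g x = g y) ∧ supNorm (fun x => g x - Qpi x) = t}.Nonempty :=
    ⟨supNorm (fun x => (0:ℝ) - Qpi x), fun _ => (0:ℝ), fun _ _ _ => rfl, rfl⟩
  have hlb : ∀ t ∈ {t : ℝ | ∃ g : S × A → ℝ,
      (∀ x y, φ x = φ y → g x = g y) ∧ supNorm (fun x => g x - Qpi x) = t},
      |cellAvg μ φ Qpi x - Qpi x| / 2 ≤ t := by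
    rintro t ⟨g, hg, rfl⟩
    have h1 : ∀ y, |Qpi y - g y| ≤ supNorm (fun x => g x - Qpi x) := fun y => by
      rw [abs_sub_comm]; exact le_supNorm (fun x => g x - Qpi x) y
    have h2 : |cellAvg μ φ Qpi x - g x| ≤ supNorm (fun x => g x - Qpi x) := by
      have e : cellAvg μ φ Qpi x - g x = cellAvg μ φ (fun y => Qpi y - g y) x := by
        rw [cellAvg_sub, cellAvg_measurable μ hμ φ g hg]
      rw [e]
      exact abs_cellAvg_le μ hμ φ (fun y => Qpi y - g y) h1 x
    have h3 : |g x - Qpi x| ≤ supNorm (fun x => g x - Qpi x) := le_supNorm (fun x => g x - Qpi x) x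
    have h4 : |cellAvg μ φ Qpi x - Qpi x| ≤ |cellAvg μ φ Qpi x - g x| + |g x - Qpi x| :=
      abs_sub_le _ _ _
    linarith
  have := le_csInf hne hlb
  rw [epsPhi]
  linarith

end

/-- population error propagation for BVFT-PE: under Assumption 1 with
`C = C_S C_A`, for every distribution `ν ≤ C μ`,
`‖f − Q^π‖₂,ν ≤ (2 ε_φ + √C ‖f − T_G^π f‖₂,μ) / (1−γ)`. -/
theorem stmt_12 {S A I : Type*} [Fintype S] [Fintype A] [Nonempty S] [Nonempty A]
    [DecidableEq I]
    (Rmax : ℝ) (R : S × A → ℝ) (hR : ∀ x, 0 ≤ R x ∧ R x ≤ Rmax)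
    (P : S × A → S → ℝ) (hP0 : ∀ x s', 0 ≤ P x s') (hP1 : ∀ x, ∑ s' : S, P x s' = 1)
    (γ : ℝ) (hγ0 : 0 ≤ γ) (hγ1 : γ < 1)
    (μ : S × A → ℝ) (hμpos : ∀ x, 0 < μ x) (hμsum : ∑ x : S × A, μ x = 1)
    (CA CS : ℝ) (hCA : 1 ≤ CA) (hCS : 1 ≤ CS)
    (hA : ∀ x : S × A, μ x ≥ (∑ a : A, μ (x.1, a)) / CA)
    (hS : ∀ x : S × A, ∀ s' : S, P x s' ≤ CS * ∑ a : A, μ (s', a))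
    (π : S → A)
    (Qpi : S × A → ℝ) (hQpi : TPol R P γ π Qpi = Qpi)
    (φ : S × A → I) (f : S × A → ℝ) :
    ∀ ν : S × A → ℝ, (∀ x, 0 ≤ ν x) → (∑ x : S × A, ν x = 1) →
      (∀ x, ν x ≤ (CS * CA) * μ x) →
      l2mu ν (fun x => f x - Qpi x) ≤
        (2 * epsPhi φ Qpi +
          Real.sqrt (CS * CA) * l2mu μ (fun x => f x - cellAvg μ φ (TPol R P γ π f) x)) /
        (1 - γ) := by
  intro ν hν0 hν1 hνdom
  classical
  have hC0 : (0:ℝ) ≤ CS * CA := by nlinarith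
  have hCApos : (0:ℝ) < CA := by linarith
  have hC1 : (1:ℝ) ≤ CS * CA := by nlinarith
  set d : S × A → ℝ := fun x => f x - Qpi x with hd
  set TG : S × A → ℝ := cellAvg μ φ (TPol R P γ π f) with hTG
  set B : ℝ := 2 * epsPhi φ Qpi + Real.sqrt (CS * CA) * l2mu μ (fun x => f x - TG x) with hB
  set MS : Set ℝ := {r | ∃ ρ : S × A → ℝ,
    ((∀ x, 0 ≤ ρ x) ∧ (∑ x : S × A, ρ x = 1) ∧ (∀ x, ρ x ≤ (CS * CA) * μ x)) ∧
      l2mu ρ d = r} with hMS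
  have hMne : MS.Nonempty := ⟨l2mu μ d, μ, ⟨fun x => (hμpos x).le, hμsum,
    fun x => le_mul_of_one_le_left (hμpos x).le hC1⟩, rfl⟩
  have hMbdd : BddAbove MS := by
    refine ⟨supNorm d, ?_⟩
    rintro r ⟨ρ, ⟨hρ0, hρ1, _⟩, rfl⟩
    exact l2mu_le_supNorm ρ hρ0 hρ1 d
  set M := sSup MS with hM
  have key : ∀ ρ : S × A → ℝ, (∀ x, 0 ≤ ρ x) → (∑ x : S × A, ρ x = 1) →
      (∀ x, ρ x ≤ (CS * CA) * μ x) → l2mu ρ d ≤ B + γ * M := by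
    intro ρ hρ0 hρ1 hρdom
    set Pd : S × A → ℝ := fun y => ∑ s' : S, P y s' * d (s', π s') with hPd
    have hQfix : ∀ y, TPol R P γ π f y - Qpi y = γ * Pd y := by
      intro y
      have hy := congrFun hQpi y
      have h' : (∑ s' : S, P y s' * f (s', π s')) - (∑ s' : S, P y s' * Qpi (s', π s'))
          = Pd y := by
        show _ = ∑ s' : S, P y s' * d (s', π s')
        rw [← Finset.sum_sub_distrib]
        refine Finset.sum_congr rfl fun s' _ => ?_
        show P y s' * f (s', π s') - P y s' * Qpi (s', π s')
          = P y s' * (f (s', π s') - Qpi (s', π s'))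
        ring
      calc TPol R P γ π f y - Qpi y = TPol R P γ π f y - TPol R P γ π Qpi y := by rw [hy]
        _ = γ * ((∑ s' : S, P y s' * f (s', π s')) - ∑ s' : S, P y s' * Qpi (s', π s')) := by
            simp only [TPol]; ring
        _ = γ * Pd y := by rw [h']
    have hTGdiff : ∀ x, TG x - cellAvg μ φ Qpi x = γ * cellAvg μ φ Pd x := by
      intro x
      have e1 : cellAvg μ φ (fun y => TPol R P γ π f y - Qpi y) x
          = TG x - cellAvg μ φ Qpi x := cellAvg_sub μ φ _ _ x
      have e2 : (fun y => TPol R P γ π f y - Qpi y) = fun y => γ * Pd y := funext hQfix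
      rw [← e1, e2, cellAvg_smul]
    set q : S → ℝ := fun s' => ∑ y : S × A, wgt μ φ ρ y * P y s' with hq
    set ν2 : S × A → ℝ := fun x => if x.2 = π x.1 then q x.1 else 0 with hν2
    have hw0 : ∀ y, 0 ≤ wgt μ φ ρ y := wgt_nonneg μ hμpos φ ρ hρ0
    have hwsum : ∑ y : S × A, wgt μ φ ρ y = 1 := wgt_sum μ hμpos φ ρ hρ1
    have hq0 : ∀ s', 0 ≤ q s' := fun s' =>
      Finset.sum_nonneg fun y _ => mul_nonneg (hw0 y) (hP0 y s')
    have hν20 : ∀ x, 0 ≤ ν2 x := by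
      intro x
      show (0:ℝ) ≤ if x.2 = π x.1 then q x.1 else 0
      split_ifs
      exacts [hq0 _, le_refl 0]
    have hsum_if : ∀ s : S, ∑ a : A, (if a = π s then q s else 0) = q s := by
      intro s
      rw [Finset.sum_ite_eq' Finset.univ (π s) (fun _ => q s)]
      simp
    have hν21 : ∑ x : S × A, ν2 x = 1 := by
      rw [Fintype.sum_prod_type]
      calc ∑ s : S, ∑ a : A, ν2 (s, a) = ∑ s : S, q s :=
            Finset.sum_congr rfl fun s _ => hsum_if s
        _ = ∑ y : S × A, ∑ s : S, wgt μ φ ρ y * P y s := Finset.sum_comm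
        _ = ∑ y : S × A, wgt μ φ ρ y := Finset.sum_congr rfl fun y _ => by
            rw [← Finset.mul_sum, hP1 y, mul_one]
        _ = 1 := hwsum
    have hν2dom : ∀ x, ν2 x ≤ (CS * CA) * μ x := by
      rintro ⟨s, a⟩
      show (if a = π s then q s else 0) ≤ (CS * CA) * μ (s, a)
      split_ifs with hc
      · subst hc
        have h1 : q s ≤ CS * ∑ b : A, μ (s, b) := by
          calc q s = ∑ y : S × A, wgt μ φ ρ y * P y s := rfl
            _ ≤ ∑ y : S × A, wgt μ φ ρ y * (CS * ∑ b : A, μ (s, b)) :=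
                Finset.sum_le_sum fun y _ =>
                  mul_le_mul_of_nonneg_left (hS y s) (hw0 y)
            _ = CS * ∑ b : A, μ (s, b) := by rw [← Finset.sum_mul, hwsum, one_mul]
        have h2 : ∑ b : A, μ (s, b) ≤ CA * μ (s, π s) := by
          have h3 : μ (s, π s) ≥ (∑ b : A, μ (s, b)) / CA := hA (s, π s)
          rw [ge_iff_le, div_le_iff₀ hCApos] at h3
          linarith
        calc q s ≤ CS * (CA * μ (s, π s)) :=
              h1.trans (mul_le_mul_of_nonneg_left h2 (by linarith : (0:ℝ) ≤ CS))
          _ = (CS * CA) * μ (s, π s) := by ring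
      · exact mul_nonneg hC0 (hμpos _).le
    have hsq : ∑ x : S × A, ρ x * (TG x - cellAvg μ φ Qpi x) ^ 2
        ≤ γ ^ 2 * ∑ x : S × A, ν2 x * d x ^ 2 := by
      have c1 : ∑ x : S × A, ρ x * (TG x - cellAvg μ φ Qpi x) ^ 2
          = γ ^ 2 * ∑ x : S × A, ρ x * (cellAvg μ φ Pd x) ^ 2 := by
        rw [Finset.mul_sum]
        exact Finset.sum_congr rfl fun x _ => by rw [hTGdiff x]; ring
      rw [c1]
      refine mul_le_mul_of_nonneg_left ?_ (sq_nonneg γ)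
      calc ∑ x : S × A, ρ x * (cellAvg μ φ Pd x) ^ 2
          ≤ ∑ x : S × A, ρ x * cellAvg μ φ (fun y => Pd y ^ 2) x :=
            Finset.sum_le_sum fun x _ =>
              mul_le_mul_of_nonneg_left (sq_cellAvg_le μ hμpos φ Pd x) (hρ0 x)
        _ = ∑ y : S × A, wgt μ φ ρ y * Pd y ^ 2 := sum_mul_cellAvg' μ hμpos φ ρ _
        _ ≤ ∑ y : S × A, wgt μ φ ρ y * (∑ s' : S, P y s' * d (s', π s') ^ 2) := by
            refine Finset.sum_le_sum fun y _ => mul_le_mul_of_nonneg_left ?_ (hw0 y)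
            have hj := jensen' Finset.univ (fun s' => P y s') (fun s' => d (s', π s'))
              (fun s' _ => hP0 y s')
            rw [hP1 y, one_mul] at hj
            exact hj
        _ = ∑ y : S × A, ∑ s' : S, wgt μ φ ρ y * (P y s' * d (s', π s') ^ 2) :=
            Finset.sum_congr rfl fun y _ => Finset.mul_sum _ _ _
        _ = ∑ s' : S, ∑ y : S × A, wgt μ φ ρ y * (P y s' * d (s', π s') ^ 2) :=
            Finset.sum_comm
        _ = ∑ s' : S, (∑ y : S × A, wgt μ φ ρ y * P y s') * d (s', π s') ^ 2 :=
            Finset.sum_congr rfl fun s' _ => by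
              rw [Finset.sum_mul]
              exact Finset.sum_congr rfl fun y _ => by ring
        _ = ∑ x : S × A, ν2 x * d x ^ 2 := by
            rw [Fintype.sum_prod_type]
            refine Finset.sum_congr rfl fun s _ => ?_
            have e : ∀ a : A, ν2 (s, a) * d (s, a) ^ 2
                = if a = π s then q s * d (s, a) ^ 2 else 0 := by
              intro a
              show (if a = π s then q s else 0) * d (s, a) ^ 2 = _
              split_ifs
              · rfl
              · rw [zero_mul]
            rw [Finset.sum_congr rfl fun a _ => e a,
              Finset.sum_ite_eq' Finset.univ (π s) (fun a => q s * d (s, a) ^ 2)]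
            simp
            exact Or.inl rfl
    have hmid : l2mu ρ (fun x => TG x - cellAvg μ φ Qpi x) ≤ γ * l2mu ν2 d := by
      have e0 : l2mu ρ (fun x => TG x - cellAvg μ φ Qpi x)
          = Real.sqrt (∑ x : S × A, ρ x * (TG x - cellAvg μ φ Qpi x) ^ 2) := rfl
      have e1 : l2mu ν2 d = Real.sqrt (∑ x : S × A, ν2 x * d x ^ 2) := rfl
      rw [e0, e1]
      calc Real.sqrt (∑ x : S × A, ρ x * (TG x - cellAvg μ φ Qpi x) ^ 2)
          ≤ Real.sqrt (γ ^ 2 * ∑ x : S × A, ν2 x * d x ^ 2) := Real.sqrt_le_sqrt hsq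
        _ = γ * Real.sqrt (∑ x : S × A, ν2 x * d x ^ 2) := by
            rw [Real.sqrt_mul (sq_nonneg γ), Real.sqrt_sq hγ0]
    have hν2M : l2mu ν2 d ≤ M := le_csSup hMbdd ⟨ν2, ⟨hν20, hν21, hν2dom⟩, rfl⟩
    have hdec : d = fun x => (f x - TG x)
        + ((TG x - cellAvg μ φ Qpi x) + (cellAvg μ φ Qpi x - Qpi x)) := by
      rw [hd]; funext x; ring
    have t1 : l2mu ρ d ≤ l2mu ρ (fun x => f x - TG x)
        + (l2mu ρ (fun x => TG x - cellAvg μ φ Qpi x)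
          + l2mu ρ (fun x => cellAvg μ φ Qpi x - Qpi x)) := by
      rw [hdec]
      exact (l2mu_triangle ρ hρ0 _ _).trans
        (add_le_add_right (l2mu_triangle ρ hρ0 _ _) _)
    have e1' : l2mu ρ (fun x => f x - TG x)
        ≤ Real.sqrt (CS * CA) * l2mu μ (fun x => f x - TG x) :=
      l2mu_le_sqrt_mul μ ρ hρ0 hC0 hρdom (fun x => (hμpos x).le) _
    have e3' : l2mu ρ (fun x => cellAvg μ φ Qpi x - Qpi x) ≤ 2 * epsPhi φ Qpi := by
      refine (l2mu_le_supNorm ρ hρ0 hρ1 _).trans ?_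
      exact Finset.sup'_le _ _ fun x _ => eps_bound μ hμpos φ Qpi x
    have e2' : l2mu ρ (fun x => TG x - cellAvg μ φ Qpi x) ≤ γ * M :=
      hmid.trans (mul_le_mul_of_nonneg_left hν2M hγ0)
    rw [hB]
    linarith [t1, e1', e3', e2']
  have hMle : M ≤ B + γ * M := by
    rw [hM]
    refine csSup_le hMne ?_
    rintro r ⟨ρ, ⟨hρ0, hρ1, hρdom⟩, rfl⟩
    exact key ρ hρ0 hρ1 hρdom
  have hMfin : M ≤ B / (1 - γ) := by
    rw [le_div_iff₀ (by linarith : (0:ℝ) < 1 - γ)]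
    nlinarith [hMle]
  exact (le_csSup hMbdd ⟨ν, ⟨hν0, hν1, hνdom⟩, rfl⟩).trans hMfin
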